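/- If n is an even positive integer, then for all integers h and m, c_n(h + m·n/2) = (−1)^m c_n(h). -/

import Mathlib

open Polynomial Finset

/-- The Ramanujan sum `c_n(r) = ∑_{1 ≤ j ≤ n, gcd(j,n)=1} e^{2πijr/n}`. -/
noncomputable def ramanujanSum (n : ℕ) (r : ℤ) : ℂ :=
  ∑ j ∈ Finset.Icc 1 n, if Nat.gcd j n = 1 then
    Complex.exp (2 * (Real.pi : ℂ) * Complex.I * (j : ℂ) * (r : ℂ) / (n : ℂ)) else 0

theorem ramanujan_half_period (n : ℕ) (hn : 1 ≤ n) (hne : Even n) (h m : ℤ) :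
    ramanujanSum n (h + m * ((n / 2 : ℕ) : ℤ)) = (-1 : ℂ) ^ m * ramanujanSum n h := by
  obtain ⟨k, rfl⟩ := hne
  have hk1 : 1 ≤ k := by omega
  have h2 : (k + k) / 2 = k := by omega
  have hkC : ((k + k : ℕ) : ℂ) ≠ 0 := by
    exact_mod_cast (by omega : k + k ≠ 0)
  have hkC' : (k : ℂ) ≠ 0 := by
    exact_mod_cast (by omega : k ≠ 0)
  unfold ramanujanSum
  rw [Finset.mul_sum]
  refine Finset.sum_congr rfl fun j hj => ?_
  by_cases hgcd : Nat.gcd j (k + k) = 1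
  · simp only [hgcd, if_true]
    have hj_odd : Odd j := by
      rcases Nat.even_or_odd j with he | ho
      · exfalso
        have : 2 ∣ Nat.gcd j (k + k) := Nat.dvd_gcd he.two_dvd (by omega)
        omega
      · exact ho
    have key : 2 * (Real.pi : ℂ) * Complex.I * (j : ℂ) *
        (((h + m * (((k + k) / 2 : ℕ) : ℤ)) : ℤ) : ℂ) / ((k + k : ℕ) : ℂ)
        = (((j : ℤ) * m : ℤ) : ℂ) * ((Real.pi : ℂ) * Complex.I)
          + 2 * (Real.pi : ℂ) * Complex.I * (j : ℂ) * (h : ℂ) / ((k + k : ℕ) : ℂ) := by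
      rw [h2]
      field_simp
      ring_nf
      push_cast
      ring
    rw [key, Complex.exp_add, Complex.exp_int_mul, Complex.exp_pi_mul_I]
    congr 1
    rw [zpow_mul, zpow_natCast, hj_odd.neg_one_pow]
  · simp [hgcd]
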